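/- Let A = ℂ⟨x,y⟩ with the double Poisson bracket ⟪x,y⟫ = x⊗x, ⟪x,x⟫ = ⟪y,y⟫ = 0. Then the zeroth double Poisson cohomology H⁰_P(A), i.e., {f ∈ A : μ(⟪f,a⟫) ∈ [A,A] for all a ∈ A} modulo [A,A], equals ℂ. -/

import Mathlib

open TensorProduct

noncomputable section

abbrev A2 := FreeAlgebra ℂ (Fin 2)

def Xg : A2 := FreeAlgebra.ι ℂ 0
def Yg : A2 := FreeAlgebra.ι ℂ 1

def mu : A2 ⊗[ℂ] A2 →ₗ[ℂ] A2 := LinearMap.mul' ℂ A2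

def commSpan : Submodule ℂ A2 :=
  Submodule.span ℂ {z : A2 | ∃ a b : A2, z = a * b - b * a}

/-- The double Casimirs of the bracket `B`: `{f | ∀ a, μ⟪f,a⟫ ∈ [A,A]}`. -/
def Cas (B : A2 →ₗ[ℂ] A2 →ₗ[ℂ] A2 ⊗[ℂ] A2) : Submodule ℂ A2 :=
  ⨅ a : A2, Submodule.comap (mu ∘ₗ B.flip a) commSpan

namespace Stmt16


/-! ### List rotation -/

def rot {α : Type*} : List α → List α
  | [] => []
  | a :: t => t ++ [a]

@[simp] lemma rot_nil {α : Type*} : rot ([] : List α) = [] := rfl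
@[simp] lemma rot_cons {α : Type*} (a : α) (t : List α) : rot (a :: t) = t ++ [a] := rfl

@[simp] lemma rot_length {α : Type*} (l : List α) : (rot l).length = l.length := by
  cases l <;> simp

@[simp] lemma rot_iter_length {α : Type*} (k : ℕ) (l : List α) :
    (rot^[k] l).length = l.length := by
  induction k generalizing l with
  | zero => rfl
  | succ n ih => rw [Function.iterate_succ_apply, ih, rot_length]

lemma rot_append {α : Type*} (p q : List α) : rot^[p.length] (p ++ q) = q ++ p := by
  induction p generalizing q with
  | nil => simp
  | cons a t ih =>
      rw [List.length_cons, Function.iterate_succ_apply, List.cons_append, rot_cons,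
        List.append_assoc]
      simpa using ih (q ++ [a])

lemma rot_self {α : Type*} (l : List α) : rot^[l.length] l = l := by
  simpa using rot_append l []

lemma rot_mul_self {α : Type*} (q : ℕ) (l : List α) : rot^[l.length * q] l = l := by
  induction q with
  | zero => simp
  | succ n ih => rw [Nat.mul_succ, Function.iterate_add_apply, rot_self, ih]

lemma rot_mod {α : Type*} (k : ℕ) (l : List α) : rot^[k] l = rot^[k % l.length] l := by
  rcases Nat.eq_zero_or_pos l.length with h | h
  · simp [h]
  · conv_lhs => rw [← Nat.mod_add_div k l.length, Function.iterate_add_apply, rot_mul_self]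

lemma rot_drop_take {α : Type*} (k : ℕ) (l : List α) (hk : k ≤ l.length) :
    rot^[k] l = l.drop k ++ l.take k := by
  have h1 : (l.take k).length = k := by simp [hk]
  have h2 := rot_append (l.take k) (l.drop k)
  rw [List.take_append_drop, h1] at h2
  exact h2

/-- shift sum lemma -/
lemma sum_rot_shift {α : Type*} (ψ : List α → ℂ) (w : List α) (m : ℕ) :
    ∑ k ∈ Finset.range w.length, ψ (rot^[k] (rot^[m] w))
      = ∑ k ∈ Finset.range w.length, ψ (rot^[k] w) := by
  induction m with
  | zero => rfl
  | succ n ih =>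
      rw [← ih]
      have hper : ∀ k, ψ (rot^[k + w.length] (rot^[n] w)) = ψ (rot^[k] (rot^[n] w)) := by
        intro k
        rw [Function.iterate_add_apply]
        congr 1
        rw [show rot^[w.length] (rot^[n] w) = rot^[w.length] (rot^[n] w) from rfl,
          ← rot_iter_length n w, rot_self]
      have h2 : ∀ k, rot^[k] (rot^[n+1] w) = rot^[k + 1] (rot^[n] w) := by
        intro k
        rw [← Function.iterate_add_apply, ← Function.iterate_add_apply]
        congr 1
        omega
      simp_rw [h2]
      set g : ℕ → ℂ := fun k => ψ (rot^[k] (rot^[n] w)) with hg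
      have e1 := Finset.sum_range_succ' g w.length
      have e2 := Finset.sum_range_succ g w.length
      have h0 : g w.length = g 0 := by simp only [hg]; simpa using hper 0
      have := e1.symm.trans e2
      rw [h0] at this
      exact (add_right_cancel this)

lemma mod_arith (n k : ℕ) (hk : k < n) : ((n - k) % n + k) % n = 0 := by
  rcases Nat.eq_zero_or_pos k with rfl | hkpos
  · simp
  · have h1 : n - k < n := by omega
    rw [Nat.mod_eq_of_lt h1]
    have : n - k + k = n := by omega
    rw [this, Nat.mod_self]

lemma rot_cancel1 {α : Type*} (l : List α) (k : ℕ) (hk : k < l.length) :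
    rot^[(l.length - k) % l.length] (rot^[k] l) = l := by
  rw [← Function.iterate_add_apply, rot_mod, mod_arith l.length k hk,
    Function.iterate_zero_apply]

lemma rot_cancel2 {α : Type*} (l : List α) (k : ℕ) (hk : k < l.length) :
    rot^[k] (rot^[(l.length - k) % l.length] l) = l := by
  rw [← Function.iterate_add_apply, rot_mod]
  have : (k + (l.length - k) % l.length) % l.length = 0 := by
    rw [Nat.add_comm]; exact mod_arith l.length k hk
  rw [this, Function.iterate_zero_apply]

lemma count_rot_symm {α : Type*} [DecidableEq α] (w u : List α) (hu : u ≠ []) :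
    ∑ k ∈ Finset.range w.length, (if rot^[k] w = u then (1:ℂ) else 0)
      = ∑ k ∈ Finset.range u.length, (if rot^[k] u = w then (1:ℂ) else 0) := by
  by_cases hlen : w.length = u.length
  · have hn : 0 < u.length := List.length_pos_iff.mpr hu
    rw [hlen]
    set n := u.length with hndef
    refine Finset.sum_nbij' (i := fun k => (n - k) % n) (j := fun k => (n - k) % n)
      ?_ ?_ ?_ ?_ ?_
    · intro a ha; exact Finset.mem_range.mpr (Nat.mod_lt _ hn)
    · intro a ha; exact Finset.mem_range.mpr (Nat.mod_lt _ hn)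
    · intro a ha
      have ha' : a < n := Finset.mem_range.mp ha
      show (n - (n - a) % n) % n = a
      rcases Nat.eq_zero_or_pos a with rfl | hapos
      · simp
      · have h1 : n - a < n := by omega
        rw [Nat.mod_eq_of_lt h1]
        have h2 : n - (n - a) = a := by omega
        rw [h2, Nat.mod_eq_of_lt ha']
    · intro a ha
      have ha' : a < n := Finset.mem_range.mp ha
      show (n - (n - a) % n) % n = a
      rcases Nat.eq_zero_or_pos a with rfl | hapos
      · simp
      · have h1 : n - a < n := by omega
        rw [Nat.mod_eq_of_lt h1]
        have h2 : n - (n - a) = a := by omega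
        rw [h2, Nat.mod_eq_of_lt ha']
    · intro k hk
      have hk' : k < n := Finset.mem_range.mp hk
      congr 1
      apply propext
      constructor
      · intro h
        rw [← h, ← hlen]
        exact rot_cancel1 w k (by omega)
      · intro h
        rw [← h]
        exact rot_cancel2 u k (by omega)
  · have h1 : ∀ k ∈ Finset.range w.length, (if rot^[k] w = u then (1:ℂ) else 0) = 0 := by
      intro k _
      rw [if_neg]
      intro h
      apply hlen
      rw [← rot_iter_length k w, h]
    have h2 : ∀ k ∈ Finset.range u.length, (if rot^[k] u = w then (1:ℂ) else 0) = 0 := by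
      intro k _
      rw [if_neg]
      intro h
      apply hlen
      rw [← rot_iter_length k u, h]
    rw [Finset.sum_congr rfl h1, Finset.sum_congr rfl h2, Finset.sum_const_zero,
      Finset.sum_const_zero]

/-! ### The monoid algebra model -/

abbrev W := FreeMonoid (Fin 2)
abbrev M := MonoidAlgebra ℂ W

instance : CoeFun M (fun _ => W → ℂ) := ⟨fun φ => φ.coeff⟩

def dw (l : List (Fin 2)) : M := MonoidAlgebra.single (FreeMonoid.ofList l) 1

def commSpanM : Submodule ℂ M :=
  Submodule.span ℂ {z : M | ∃ a b : M, z = a * b - b * a}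

lemma dw_mul (p q : List (Fin 2)) : dw p * dw q = dw (p ++ q) := by
  rw [dw, dw, dw, MonoidAlgebra.single_mul_single, FreeMonoid.ofList_append, one_mul]

@[simp] lemma dw_apply (l z : List (Fin 2)) :
    (dw l) (FreeMonoid.ofList z) = if l = z then (1:ℂ) else 0 := by
  classical
  rw [dw, MonoidAlgebra.coeff_single, Finsupp.single_apply]
  simp [Equiv.apply_eq_iff_eq]

/-- rotation-sum of coefficients -/
def Rs (φ : M) (v : List (Fin 2)) : ℂ :=
  ∑ k ∈ Finset.range v.length, φ (FreeMonoid.ofList (rot^[k] v))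

lemma Rs_add (φ ψ : M) (v : List (Fin 2)) : Rs (φ + ψ) v = Rs φ v + Rs ψ v := by
  rw [Rs, Rs, Rs, ← Finset.sum_add_distrib]
  exact Finset.sum_congr rfl fun k _ => Finsupp.add_apply _ _ _

@[simp] lemma Rs_zero (v : List (Fin 2)) : Rs 0 v = 0 := by simp [Rs]

lemma Rs_smul (c : ℂ) (φ : M) (v : List (Fin 2)) : Rs (c • φ) v = c * Rs φ v := by
  rw [Rs, Rs, Finset.mul_sum]
  exact Finset.sum_congr rfl fun k _ => rfl

lemma Rs_single (u : W) (r : ℂ) (v : List (Fin 2)) :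
    Rs (MonoidAlgebra.single u r) v
      = r * ∑ k ∈ Finset.range v.length, (if rot^[k] v = u.toList then (1:ℂ) else 0) := by
  classical
  rw [Rs, Finset.mul_sum]
  refine Finset.sum_congr rfl fun k _ => ?_
  rw [MonoidAlgebra.coeff_single, Finsupp.single_apply]
  have hiff : (u = FreeMonoid.ofList (rot^[k] v)) ↔ (rot^[k] v = u.toList) := by
    constructor
    · intro h; rw [h, FreeMonoid.toList_ofList]
    · intro h; rw [h, FreeMonoid.ofList_toList]
  by_cases h : rot^[k] v = u.toList
  · rw [if_pos (hiff.mpr h), if_pos h, mul_one]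
  · rw [if_neg (fun hh => h (hiff.mp hh)), if_neg h, mul_zero]

lemma Rs_sub (φ ψ : M) (v : List (Fin 2)) : Rs (φ - ψ) v = Rs φ v - Rs ψ v := by
  rw [Rs, Rs, Rs, ← Finset.sum_sub_distrib]
  exact Finset.sum_congr rfl fun k _ => Finsupp.sub_apply _ _ _

lemma Rs_rot (φ : M) (v : List (Fin 2)) (m : ℕ) : Rs φ (rot^[m] v) = Rs φ v := by
  rw [Rs, Rs, rot_iter_length]
  exact sum_rot_shift (fun l => φ (FreeMonoid.ofList l)) v m

/-- `Rs` vanishes on commutators. -/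
lemma Rs_comm (z : M) (hz : z ∈ commSpanM) (v : List (Fin 2)) : Rs z v = 0 := by
  induction hz using Submodule.span_induction with
  | zero => simp
  | add x y _ _ hx hy => rw [Rs_add, hx, hy, add_zero]
  | smul c x _ hx => rw [Rs_smul, hx, mul_zero]
  | mem x hx =>
      obtain ⟨a, b, rfl⟩ := hx
      have key2 : ∀ (b : M) (p : W) (r : ℂ),
          Rs (MonoidAlgebra.single p r * b) v = Rs (b * MonoidAlgebra.single p r) v := by
        intro b p r
        induction b using MonoidAlgebra.induction with
        | zero => simp
        | single_add q s g _ _ ihg =>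
            rw [mul_add, add_mul]
            rw [Rs_add, Rs_add, ihg]
            congr 1
            rw [MonoidAlgebra.single_mul_single, MonoidAlgebra.single_mul_single,
              Rs_single, Rs_single, mul_comm s r]
            congr 1
            by_cases hpq : (p * q).toList = []
            · have hpq' : p.toList ++ q.toList = [] := by
                rw [← FreeMonoid.toList_mul, hpq]
              have hp : p.toList = [] := (List.append_eq_nil_iff.mp hpq').1
              have hq : q.toList = [] := (List.append_eq_nil_iff.mp hpq').2
              have hqp : (q * p).toList = [] := by
                rw [FreeMonoid.toList_mul, hq, hp]; rfl
              rw [hpq, hqp]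
            · have hqp : (q * p).toList ≠ [] := by
                rw [FreeMonoid.toList_mul]
                rw [FreeMonoid.toList_mul] at hpq
                intro h
                rcases List.append_eq_nil_iff.mp h with ⟨h1, h2⟩
                exact hpq (by rw [h2, h1]; rfl)
              rw [count_rot_symm v _ hpq, count_rot_symm v _ hqp]
              have hlen : (q * p).toList.length = (p * q).toList.length := by
                simp [FreeMonoid.toList_mul, Nat.add_comm]
              rw [hlen]
              have hrot : (q * p).toList = rot^[p.toList.length] ((p * q).toList) := by
                rw [FreeMonoid.toList_mul, FreeMonoid.toList_mul, rot_append]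
              rw [hrot]
              exact (sum_rot_shift (fun l => if l = v then (1:ℂ) else 0)
                ((p * q).toList) p.toList.length).symm
      have key : ∀ a b : M, Rs (a * b) v = Rs (b * a) v := by
        intro a b
        induction a using MonoidAlgebra.induction with
        | zero => simp
        | single_add p r f _ _ ihf =>
            rw [add_mul, mul_add]
            rw [Rs_add, Rs_add, ihf]
            congr 1
            exact key2 b p r
      rw [Rs_sub, key, sub_self]


/-! ### commutator facts and the symmetrization map N -/

lemma dw_sub_rot_mem (l : List (Fin 2)) : dw l - dw (rot l) ∈ commSpanM := by
  cases l with
  | nil => simp [rot]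
  | cons a t =>
      have : dw (a :: t) - dw (rot (a :: t)) = dw [a] * dw t - dw t * dw [a] := by
        rw [dw_mul, dw_mul, rot_cons]
        rfl
      rw [this]
      exact Submodule.subset_span ⟨dw [a], dw t, rfl⟩

lemma dw_sub_rot_iter_mem (k : ℕ) (l : List (Fin 2)) :
    dw l - dw (rot^[k] l) ∈ commSpanM := by
  induction k with
  | zero => simp
  | succ n ih =>
      have : dw l - dw (rot^[n+1] l)
          = (dw l - dw (rot^[n] l)) + (dw (rot^[n] l) - dw (rot (rot^[n] l))) := by
        rw [Function.iterate_succ_apply']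
        abel
      rw [this]
      exact Submodule.add_mem _ ih (dw_sub_rot_mem _)

def Nw (l : List (Fin 2)) : M :=
  if l = [] then dw [] else
    (l.length : ℂ)⁻¹ • ∑ k ∈ Finset.range l.length, dw (rot^[k] l)

def Nmap : M →ₗ[ℂ] M :=
  Finsupp.lsum ℂ (fun (w : W) => LinearMap.toSpanSingleton ℂ M (Nw w.toList)) ∘ₗ
    (MonoidAlgebra.coeffLinearEquiv ℂ).toLinearMap

lemma Nmap_single (u : W) (r : ℂ) :
    Nmap (MonoidAlgebra.single u r) = r • Nw u.toList :=
  Finsupp.lsum_single ℂ (fun (w : W) => LinearMap.toSpanSingleton ℂ M (Nw w.toList)) u r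

lemma single_eq_smul_dw (u : W) (r : ℂ) :
    (MonoidAlgebra.single u r : M) = r • dw u.toList := by
  rw [dw, FreeMonoid.ofList_toList, MonoidAlgebra.smul_single', mul_one]

lemma sub_Nmap_mem (φ : M) : φ - Nmap φ ∈ commSpanM := by
  have key : ∀ x y : M, (x + y) - Nmap (x + y) = (x - Nmap x) + (y - Nmap y) := by
    intro x y; rw [map_add]; abel
  induction φ using MonoidAlgebra.induction with
  | zero => simp
  | single_add u r f _ _ ih =>
      rw [key]
      refine Submodule.add_mem _ ?_ ih
      rw [Nmap_single, Nw]
      by_cases hu : u.toList = []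
      · rw [if_pos hu, single_eq_smul_dw, hu, sub_self]
        exact Submodule.zero_mem _
      · rw [if_neg hu]
        set n := u.toList.length with hn
        have hn0 : (n : ℂ) ≠ 0 := by
          have : 0 < n := List.length_pos_iff.mpr hu
          exact_mod_cast Nat.pos_iff_ne_zero.mp this
        have hS : MonoidAlgebra.single u r - r • ((n : ℂ)⁻¹ •
            ∑ k ∈ Finset.range n, dw (rot^[k] u.toList))
            = (r * (n : ℂ)⁻¹) • ∑ k ∈ Finset.range n,
                (dw u.toList - dw (rot^[k] u.toList)) := by
          rw [Finset.sum_sub_distrib, Finset.sum_const, Finset.card_range, smul_sub,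
            single_eq_smul_dw, smul_smul]
          congr 1
          rw [← Nat.cast_smul_eq_nsmul ℂ n (dw u.toList), smul_smul]
          congr 1
          field_simp
        rw [hS]
        exact Submodule.smul_mem _ _ (Submodule.sum_mem _ fun k _ => dw_sub_rot_iter_mem k _)

lemma sum_dw_apply (s : Finset ℕ) (g : ℕ → List (Fin 2)) (z : W) :
    (∑ k ∈ s, dw (g k)) z = ∑ k ∈ s, (dw (g k)) z := by
  rw [MonoidAlgebra.coeff_sum]; exact Finset.sum_apply' z

lemma sum_apply_M (s : Finset ℕ) (g : ℕ → M) (z : W) :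
    (∑ k ∈ s, g k) z = ∑ k ∈ s, (g k) z := by
  rw [MonoidAlgebra.coeff_sum]; exact Finset.sum_apply' z

lemma Nmap_apply_nil (φ : M) : Nmap φ (1 : W) = φ 1 := by
  classical
  induction φ using MonoidAlgebra.induction with
  | zero => simp
  | single_add u r f _ _ ih =>
      rw [map_add,
        MonoidAlgebra.coeff_add, Finsupp.add_apply, MonoidAlgebra.coeff_add, Finsupp.add_apply, ih, Nmap_single]
      congr 1
      rw [MonoidAlgebra.coeff_smul, Finsupp.smul_apply, Nw]
      by_cases hu : u.toList = []
      · rw [if_pos hu]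
        have hu1 : u = 1 := by
          rw [← FreeMonoid.ofList_toList u, hu, FreeMonoid.ofList_nil]
        rw [hu1]
        have h1 : (dw []) (1 : W) = 1 := by
          have := dw_apply [] []
          rw [FreeMonoid.ofList_nil] at this
          simpa using this
        rw [h1]
        simp [MonoidAlgebra.coeff_single, Finsupp.single_apply]
      · rw [if_neg hu, MonoidAlgebra.coeff_smul, Finsupp.smul_apply, sum_dw_apply]
        have hz : ∀ k ∈ Finset.range u.toList.length, (dw (rot^[k] u.toList)) (1 : W) = 0 := by
          intro k _
          have := dw_apply (rot^[k] u.toList) []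
          rw [FreeMonoid.ofList_nil] at this
          rw [this, if_neg]
          intro h
          apply hu
          have : u.toList.length = 0 := by rw [← rot_iter_length k u.toList, h]; rfl
          exact List.length_eq_zero_iff.mp this
        rw [Finset.sum_congr rfl hz, Finset.sum_const_zero, smul_zero, smul_zero]
        have : u ≠ 1 := by
          intro h
          apply hu
          rw [h]
          rfl
        rw [MonoidAlgebra.coeff_single, Finsupp.single_apply, if_neg this]

lemma Nmap_apply (φ : M) (v : List (Fin 2)) (hv : v ≠ []) :
    Nmap φ (FreeMonoid.ofList v) = (v.length : ℂ)⁻¹ * Rs φ v := by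
  classical
  induction φ using MonoidAlgebra.induction with
  | zero => simp
  | single_add u r f _ _ ih =>
      rw [map_add,
        MonoidAlgebra.coeff_add, Finsupp.add_apply, Rs_add, mul_add, ih, Nmap_single]
      congr 1
      rw [MonoidAlgebra.coeff_smul, Finsupp.smul_apply, Rs_single, Nw]
      by_cases hu : u.toList = []
      · rw [if_pos hu]
        rw [dw_apply, if_neg (by intro h; exact hv h.symm)]
        have hz : ∀ k ∈ Finset.range v.length,
            (if rot^[k] v = u.toList then (1:ℂ) else 0) = 0 := by
          intro k _
          rw [if_neg]
          intro h
          apply hv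
          have : v.length = 0 := by
            rw [← rot_iter_length k v, h, hu]; rfl
          exact List.length_eq_zero_iff.mp this
        rw [Finset.sum_congr rfl hz, Finset.sum_const_zero, smul_zero, mul_zero, mul_zero]
      · rw [if_neg hu, MonoidAlgebra.coeff_smul, Finsupp.smul_apply, sum_dw_apply]
        have hterm : ∀ k ∈ Finset.range u.toList.length,
            (dw (rot^[k] u.toList)) (FreeMonoid.ofList v)
              = (if rot^[k] u.toList = v then (1:ℂ) else 0) := by
          intro k _
          rw [dw_apply]
        rw [Finset.sum_congr rfl hterm]
        rw [count_rot_symm v u.toList hu]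
        rw [smul_eq_mul, smul_eq_mul]
        by_cases hl : u.toList.length = v.length
        · rw [hl]; ring
        · have z1 : ∑ k ∈ Finset.range u.toList.length,
              (if rot^[k] u.toList = v then (1:ℂ) else 0) = 0 := by
            refine Finset.sum_eq_zero fun k _ => if_neg fun h => hl ?_
            rw [← rot_iter_length k u.toList, h]
          rw [z1, mul_zero, mul_zero, mul_zero]

lemma C2 (φ : M) (h : ∀ v : List (Fin 2), v ≠ [] → Rs φ v = 0) :
    φ - (φ 1) • 1 ∈ commSpanM := by
  classical
  have hN : Nmap φ = (φ 1) • (1 : M) := by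
    apply MonoidAlgebra.ext
    apply Finsupp.ext
    intro a
    have ha : a = FreeMonoid.ofList a.toList := (FreeMonoid.ofList_toList a).symm
    by_cases hnil : a.toList = []
    · have ha1 : a = 1 := by rw [ha, hnil, FreeMonoid.ofList_nil]
      rw [ha1, Nmap_apply_nil]
      rw [MonoidAlgebra.one_def, MonoidAlgebra.smul_single', MonoidAlgebra.coeff_single, Finsupp.single_apply, if_pos rfl, mul_one]
    · rw [ha, Nmap_apply φ a.toList hnil, h a.toList hnil, mul_zero]
      have hne : (1 : W) ≠ FreeMonoid.ofList a.toList := by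
        intro hh
        apply hnil
        have h2 := congrArg FreeMonoid.toList hh
        rw [FreeMonoid.toList_ofList] at h2
        rw [← h2]
        rfl
      rw [MonoidAlgebra.one_def, MonoidAlgebra.smul_single', MonoidAlgebra.coeff_single, Finsupp.single_apply, if_neg hne]
  have : φ - (φ 1) • 1 = φ - Nmap φ := by rw [hN]
  rw [this]
  exact sub_Nmap_mem φ


/-! ### The explicit model of the bracket maps -/

lemma dw_nil : dw [] = (1 : M) := by
  rw [dw, FreeMonoid.ofList_nil, MonoidAlgebra.one_def]

def XX : M := dw [0]

def Fm (c : Fin 2) : List (Fin 2) → M →ₗ[ℂ] M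
  | [] => 0
  | a :: u => (Fm c u) ∘ₗ (LinearMap.mulRight ℂ (dw [a]))
      + (if a = c then (LinearMap.mulLeft ℂ XX) ∘ₗ (LinearMap.mulRight ℂ XX)
          ∘ₗ (LinearMap.mulLeft ℂ (dw u)) else 0)

@[simp] lemma Fm_nil (c : Fin 2) : Fm c [] = 0 := rfl

lemma Fm_cons (c a : Fin 2) (u : List (Fin 2)) (z : M) :
    Fm c (a :: u) z = Fm c u (z * dw [a])
      + (if a = c then XX * ((dw u * z) * XX) else 0) := by
  rw [Fm]
  by_cases h : a = c
  · rw [if_pos h, if_pos h]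
    rfl
  · rw [if_neg h, if_neg h]
    rfl

lemma Fm_append (c : Fin 2) (p q : List (Fin 2)) (z : M) :
    Fm c (p ++ q) z = Fm c q (z * dw p) + Fm c p (dw q * z) := by
  induction p generalizing z with
  | nil => rw [List.nil_append, dw_nil, mul_one, Fm_nil, LinearMap.zero_apply, add_zero]
  | cons a p' ih =>
      rw [List.cons_append, Fm_cons, ih (z * dw [a]), Fm_cons]
      have h1 : z * dw [a] * dw p' = z * dw (a :: p') := by
        rw [mul_assoc, dw_mul]
        rfl
      have h2 : dw q * z * dw [a] = dw q * (z * dw [a]) := by rw [mul_assoc]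
      have h3 : dw (p' ++ q) * z = dw p' * (dw q * z) := by
        rw [← dw_mul, mul_assoc]
      rw [h1, h2, h3]
      abel

def FM (c : Fin 2) : M →ₗ[ℂ] M →ₗ[ℂ] M :=
  Finsupp.lsum ℂ (fun (w : W) => LinearMap.toSpanSingleton ℂ (M →ₗ[ℂ] M) (Fm c w.toList)) ∘ₗ
    (MonoidAlgebra.coeffLinearEquiv ℂ).toLinearMap

lemma FM_single (c : Fin 2) (u : W) (r : ℂ) :
    FM c (MonoidAlgebra.single u r) = r • Fm c u.toList :=
  Finsupp.lsum_single ℂ (fun (w : W) => LinearMap.toSpanSingleton ℂ (M →ₗ[ℂ] M) (Fm c w.toList)) u r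

/-- Leibniz rule for FM, single case. -/
lemma FM_single_mul (c : Fin 2) (χ : M) (p : W) (r : ℂ) (z : M) :
    FM c (MonoidAlgebra.single p r * χ) z
      = FM c χ (z * MonoidAlgebra.single p r) + FM c (MonoidAlgebra.single p r) (χ * z) := by
  induction χ using MonoidAlgebra.induction generalizing z with
  | zero => simp
  | single_add q s g _ _ ihg =>
      simp only [mul_add, add_mul, map_add, LinearMap.add_apply]
      rw [ihg z]
      have key : FM c (MonoidAlgebra.single p r * MonoidAlgebra.single q s) z
          = FM c (MonoidAlgebra.single q s) (z * MonoidAlgebra.single p r)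
            + FM c (MonoidAlgebra.single p r) (MonoidAlgebra.single q s * z) := by
        rw [MonoidAlgebra.single_mul_single, FM_single, FM_single, FM_single,
          single_eq_smul_dw p r, single_eq_smul_dw q s]
        rw [LinearMap.smul_apply, LinearMap.smul_apply, LinearMap.smul_apply]
        have ht : (p * q).toList = p.toList ++ q.toList := FreeMonoid.toList_mul p q
        rw [ht, Fm_append]
        simp only [smul_mul_assoc, mul_smul_comm, map_smul, smul_add, smul_smul]
        rw [mul_comm s r]
      rw [key]
      abel

/-- Leibniz rule for FM. -/
lemma FM_mul (c : Fin 2) (φ χ : M) (z : M) :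
    FM c (φ * χ) z = FM c χ (z * φ) + FM c φ (χ * z) := by
  induction φ using MonoidAlgebra.induction generalizing z with
  | zero => simp
  | single_add p r f _ _ ihf =>
      simp only [add_mul, mul_add, map_add, LinearMap.add_apply]
      rw [ihf z, FM_single_mul c χ p r z]
      abel

/-- closed form -/
lemma Fm_closed (c : Fin 2) (w : List (Fin 2)) (z : M) :
    Fm c w z = ∑ i ∈ Finset.range w.length,
      (if w.getD i 0 = c
        then XX * ((dw (w.drop (i+1)) * (z * dw (w.take i))) * XX) else 0) := by
  induction w generalizing z with
  | nil => simp
  | cons a u ih =>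
      rw [Fm_cons, ih (z * dw [a]), List.length_cons, Finset.sum_range_succ']
      refine congrArg₂ (· + ·) ?_ ?_
      · refine Finset.sum_congr rfl fun i _ => ?_
        rw [List.getD_cons_succ]
        by_cases h : u.getD i 0 = c
        · rw [if_pos h, if_pos h]
          rw [List.drop_succ_cons, List.take_succ_cons]
          rw [show (a :: u.take i) = [a] ++ u.take i from rfl, ← dw_mul]
          simp only [mul_assoc]
        · rw [if_neg h, if_neg h]
      · rw [List.getD_cons_zero]
        by_cases h : a = c
        · rw [if_pos h, if_pos h]
          rw [List.drop_succ_cons, List.drop_zero, List.take_zero, dw_nil, mul_one]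
        · rw [if_neg h, if_neg h]

def theta (c : Fin 2) : List (Fin 2) → M
  | [] => 0
  | a :: u => if a = c then dw (0 :: 0 :: u) else 0

def XiW (c : Fin 2) (l : List (Fin 2)) : M :=
  ∑ k ∈ Finset.range l.length, theta c (rot^[k] l)

def Xi (c : Fin 2) : M →ₗ[ℂ] M :=
  Finsupp.lsum ℂ (fun (w : W) => LinearMap.toSpanSingleton ℂ M (XiW c w.toList)) ∘ₗ
    (MonoidAlgebra.coeffLinearEquiv ℂ).toLinearMap

lemma Xi_single (c : Fin 2) (u : W) (r : ℂ) :
    Xi c (MonoidAlgebra.single u r) = r • XiW c u.toList :=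
  Finsupp.lsum_single ℂ (fun (w : W) => LinearMap.toSpanSingleton ℂ M (XiW c w.toList)) u r

lemma Fm_one_sub_XiW_mem (c : Fin 2) (w : List (Fin 2)) :
    Fm c w 1 - XiW c w ∈ commSpanM := by
  rw [Fm_closed, XiW, ← Finset.sum_sub_distrib]
  refine Submodule.sum_mem _ fun i hi' => ?_
  have hi : i < w.length := Finset.mem_range.mp hi'
  have hrot : rot^[i] w = w.getD i 0 :: (w.drop (i+1) ++ w.take i) := by
    rw [rot_drop_take _ _ (le_of_lt hi), List.drop_eq_getElem_cons hi, List.cons_append,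
      List.getD_eq_getElem w 0 hi]
  rw [hrot, theta]
  by_cases h : w.getD i 0 = c
  · rw [if_pos h, if_pos h]
    set q : List (Fin 2) := w.drop (i+1) ++ w.take i with hq
    have h1 : XX * ((dw (w.drop (i+1)) * ((1:M) * dw (w.take i))) * XX)
        = dw (rot ((0:Fin 2) :: 0 :: q)) := by
      rw [rot_cons, one_mul]
      simp only [XX, dw_mul]
      rfl
    rw [h1]
    have h3 := dw_sub_rot_mem ((0:Fin 2) :: 0 :: q)
    have hneg := Submodule.neg_mem _ h3
    rw [neg_sub] at hneg
    exact hneg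
  · rw [if_neg h, if_neg h, sub_zero]
    exact Submodule.zero_mem _

lemma FM_one_sub_Xi_mem (c : Fin 2) (φ : M) : FM c φ 1 - Xi c φ ∈ commSpanM := by
  induction φ using MonoidAlgebra.induction with
  | zero => simp
  | single_add u r f _ _ ih =>
      have key : ∀ x y : M, FM c (x + y) 1 - Xi c (x + y)
          = (FM c x 1 - Xi c x) + (FM c y 1 - Xi c y) := by
        intro x y
        rw [map_add, map_add, LinearMap.add_apply]
        abel
      rw [key]
      refine Submodule.add_mem _ ?_ ih
      rw [FM_single, Xi_single, LinearMap.smul_apply, ← smul_sub]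
      exact Submodule.smul_mem _ _ (Fm_one_sub_XiW_mem c u.toList)

/-- the coefficient functional of `Xi` -/
def trig (c : Fin 2) (φ : M) : List (Fin 2) → ℂ
  | a :: b :: u => if a = 0 ∧ b = 0 then Rs φ (c :: u) else 0
  | _ => 0

lemma trig_add (c : Fin 2) (φ ψ : M) (z : List (Fin 2)) :
    trig c (φ + ψ) z = trig c φ z + trig c ψ z := by
  match z with
  | [] => simp [trig]
  | [a] => simp [trig]
  | a :: b :: u =>
      rw [trig, trig, trig]
      by_cases h : a = 0 ∧ b = 0
      · rw [if_pos h, if_pos h, if_pos h, Rs_add]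
      · rw [if_neg h, if_neg h, if_neg h, add_zero]

lemma theta_apply_nonform (c : Fin 2) (l z : List (Fin 2))
    (hz : ∀ u : List (Fin 2), z ≠ 0 :: 0 :: u) :
    (theta c l) (FreeMonoid.ofList z) = 0 := by
  match l with
  | [] => rw [theta]; rfl
  | a :: u =>
      rw [theta]
      by_cases h : a = c
      · rw [if_pos h, dw_apply, if_neg]
        intro hh
        exact hz u hh.symm
      · rw [if_neg h]
        rfl

lemma Xi_apply (c : Fin 2) (φ : M) (z : List (Fin 2)) :
    (Xi c φ) (FreeMonoid.ofList z) = trig c φ z := by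
  classical
  induction φ using MonoidAlgebra.induction with
  | zero =>
      rw [map_zero, MonoidAlgebra.coeff_zero, Finsupp.zero_apply]
      match z with
      | [] => rfl
      | [a] => rfl
      | a :: b :: u => rw [trig]; by_cases h : a = 0 ∧ b = 0
                       · rw [if_pos h, Rs_zero]
                       · rw [if_neg h]
  | single_add u r f _ _ ih =>
      rw [map_add,
        MonoidAlgebra.coeff_add, Finsupp.add_apply, ih, trig_add]
      congr 1
      rw [Xi_single, MonoidAlgebra.coeff_smul, Finsupp.smul_apply, smul_eq_mul]
      match z with
      | [] =>
          rw [XiW, sum_apply_M]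
          · rw [Finset.sum_congr rfl (fun k _ => theta_apply_nonform c _ [] (by simp)),
              Finset.sum_const_zero, mul_zero]
            rfl
      | [a] =>
          rw [XiW, sum_apply_M]
          · rw [Finset.sum_congr rfl (fun k _ => theta_apply_nonform c _ [a] (by simp)),
              Finset.sum_const_zero, mul_zero]
            rfl
      | a :: b :: v =>
          rw [XiW, sum_apply_M]
          by_cases hab : a = 0 ∧ b = 0
          · obtain ⟨rfl, rfl⟩ := hab
            have hterm : ∀ k ∈ Finset.range u.toList.length,
                (theta c (rot^[k] u.toList)) (FreeMonoid.ofList ((0:Fin 2) :: 0 :: v))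
                  = (if rot^[k] u.toList = c :: v then (1:ℂ) else 0) := by
              intro k _
              rcases hr : rot^[k] u.toList with _ | ⟨a', u'⟩
              · rw [theta]
                rw [if_neg]
                · rfl
                · intro hh; exact (by exact List.cons_ne_nil _ _ : (c : Fin 2) :: v ≠ []) hh.symm
              · rw [theta]
                by_cases h' : a' = c
                · rw [if_pos h', dw_apply]
                  by_cases h2 : u' = v
                  · rw [if_pos (by rw [h2]), if_pos (by rw [h', h2])]
                  · rw [if_neg (by intro hh; exact h2 (by injection hh with _ hh2; injection hh2)),
                      if_neg (by intro hh; injection hh with hh1 hh2; exact h2 hh2)]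
                · rw [if_neg h', if_neg (by intro hh; injection hh with hh1 hh2; exact h' hh1)]
                  rfl
            rw [Finset.sum_congr rfl hterm]
            rw [trig, if_pos ⟨rfl, rfl⟩, Rs_single]
            rw [count_rot_symm u.toList (c :: v) (List.cons_ne_nil _ _)]
          · have hterm : ∀ k ∈ Finset.range u.toList.length,
                (theta c (rot^[k] u.toList)) (FreeMonoid.ofList (a :: b :: v)) = 0 := by
              intro k _
              refine theta_apply_nonform c _ _ ?_
              intro u' hh
              injection hh with h1 hh2
              injection hh2 with h2 _
              exact hab ⟨h1, h2⟩
            rw [Finset.sum_congr rfl hterm, Finset.sum_const_zero, mul_zero, trig, if_neg hab]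

lemma Econd (c : Fin 2) (φ : M) (hφ : FM c φ 1 ∈ commSpanM) (v : List (Fin 2)) :
    ∑ k ∈ Finset.range v.length, trig c φ (rot^[k] v) = 0 := by
  have h1 : Xi c φ ∈ commSpanM := by
    have := Submodule.sub_mem _ hφ (FM_one_sub_Xi_mem c φ)
    simpa using this
  have h2 := Rs_comm _ h1 v
  rw [Rs] at h2
  rw [← h2]
  exact Finset.sum_congr rfl fun k _ => (Xi_apply c φ _).symm


/-! ### run-length machinery -/

def lead (l : List (Fin 2)) : ℕ := (l.takeWhile (fun a => a == 0)).length

lemma lead_replicate_append (s : ℕ) (q : List (Fin 2)) :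
    s ≤ lead (List.replicate s 0 ++ q) := by
  induction s with
  | zero => exact Nat.zero_le _
  | succ n ih =>
      rw [List.replicate_succ, List.cons_append, lead,
        List.takeWhile_cons_of_pos (by simp), List.length_cons]
      exact Nat.succ_le_succ ih

lemma lead_decomp (l : List (Fin 2)) :
    l = List.replicate (lead l) 0 ++ l.dropWhile (fun a => a == 0) := by
  have h1 : l.takeWhile (fun a => a == 0) = List.replicate (lead l) 0 := by
    rw [List.eq_replicate_iff]
    refine ⟨rfl, fun b hb => ?_⟩
    have := List.mem_takeWhile_imp hb
    simpa using this
  conv_lhs => rw [← List.takeWhile_append_dropWhile (p := fun a => a == 0) (l := l)]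
  rw [h1]

lemma replicate_pred {n : ℕ} (hn : 1 ≤ n) (a : Fin 2) :
    List.replicate n a = a :: List.replicate (n-1) a := by
  obtain ⟨n', rfl⟩ : ∃ n', n = n' + 1 := ⟨n - 1, by omega⟩
  simp [List.replicate_succ]

def Mx (l : List (Fin 2)) : ℕ :=
  Finset.sup (Finset.range l.length) (fun k => lead (rot^[k] l))

lemma lead_le_Mx (l : List (Fin 2)) (k : ℕ) (hk : k < l.length) :
    lead (rot^[k] l) ≤ Mx l :=
  Finset.le_sup (f := fun k => lead (rot^[k] l)) (Finset.mem_range.mpr hk)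

lemma Mx_exists (l : List (Fin 2)) (hl : l ≠ []) :
    ∃ k < l.length, lead (rot^[k] l) = Mx l := by
  obtain ⟨i, hi, hs⟩ := Finset.exists_mem_eq_sup (Finset.range l.length)
    (by rw [Finset.nonempty_range_iff]; exact fun h => hl (List.length_eq_zero_iff.mp h))
    (fun k => lead (rot^[k] l))
  exact ⟨i, Finset.mem_range.mp hi, hs.symm⟩

lemma Mx_rot_le (l : List (Fin 2)) (j : ℕ) : Mx (rot^[j] l) ≤ Mx l := by
  rcases eq_or_ne l [] with rfl | hl
  · simp [Mx]
  · have hn : 0 < l.length := List.length_pos_iff.mpr hl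
    refine Finset.sup_le fun k hk => ?_
    rw [← Function.iterate_add_apply, rot_mod]
    exact lead_le_Mx l _ (Nat.mod_lt _ hn)

lemma Mx_rot (l : List (Fin 2)) (j : ℕ) : Mx (rot^[j] l) = Mx l := by
  rcases eq_or_ne l [] with rfl | hl
  · simp [Mx]
  · have hn : 0 < l.length := List.length_pos_iff.mpr hl
    refine le_antisymm (Mx_rot_le l j) ?_
    have hback : rot^[l.length - j % l.length] (rot^[j] l) = l := by
      rw [← Function.iterate_add_apply]
      have hj := Nat.div_add_mod j l.length
      have hlt : j % l.length < l.length := Nat.mod_lt _ hn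
      have key : l.length - j % l.length + j = l.length * (1 + j / l.length) := by
        rw [Nat.mul_add, Nat.mul_one]
        omega
      rw [key, rot_mul_self]
    conv_lhs => rw [← hback]
    exact Mx_rot_le _ _

lemma Mx_ge (p q : List (Fin 2)) (s : ℕ) (hs : 1 ≤ s) :
    s ≤ Mx (p ++ (List.replicate s 0 ++ q)) := by
  have hlen : p.length < (p ++ (List.replicate s 0 ++ q)).length := by
    simp only [List.length_append, List.length_replicate]
    omega
  have h1 : rot^[p.length] (p ++ (List.replicate s 0 ++ q))
      = List.replicate s 0 ++ (q ++ p) := by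
    rw [rot_append, List.append_assoc]
  calc s ≤ lead (List.replicate s 0 ++ (q ++ p)) := lead_replicate_append s _
    _ = lead (rot^[p.length] (p ++ (List.replicate s 0 ++ q))) := by rw [h1]
    _ ≤ _ := lead_le_Mx _ _ hlen

lemma Mx_pos (l : List (Fin 2)) (h : (0:Fin 2) ∈ l) : 1 ≤ Mx l := by
  obtain ⟨p, t, rfl⟩ := List.append_of_mem h
  exact Mx_ge p t 1 le_rfl

lemma trig_head_ne (c : Fin 2) (φ : M) (a : Fin 2) (z : List (Fin 2)) (ha : a ≠ 0) :
    trig c φ (a :: z) = 0 := by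
  match z with
  | [] => rfl
  | b :: u =>
      rw [trig, if_neg]
      intro hh
      exact ha hh.1

lemma trig_second_ne (c : Fin 2) (φ : M) (a b : Fin 2) (u : List (Fin 2)) (hb : b ≠ 0) :
    trig c φ (a :: b :: u) = 0 := by
  rw [trig, if_neg]
  intro hh
  exact hb hh.2

lemma trig_form (c : Fin 2) (φ : M) (u : List (Fin 2)) :
    trig c φ (0 :: 0 :: u) = Rs φ (c :: u) := by
  rw [trig, if_pos ⟨rfl, rfl⟩]

lemma rot_replicate (s : ℕ) (a : Fin 2) : rot (List.replicate s a) = List.replicate s a := by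
  cases s with
  | zero => rfl
  | succ n =>
      rw [List.replicate_succ, rot_cons, ← List.replicate_succ' (n := n) (a := a), List.replicate_succ]

lemma rot_iter_replicate (k s : ℕ) (a : Fin 2) :
    rot^[k] (List.replicate s a) = List.replicate s a := by
  induction k with
  | zero => rfl
  | succ n ih => rw [Function.iterate_succ_apply', ih, rot_replicate]

/-! ### the main combinatorial argument -/

section MainComb

variable (φ : M)
  (h0 : ∀ v : List (Fin 2), ∑ k ∈ Finset.range v.length, trig 0 φ (rot^[k] v) = 0)
  (h1 : ∀ v : List (Fin 2), ∑ k ∈ Finset.range v.length, trig 1 φ (rot^[k] v) = 0)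

include h1 in
lemma all_ones_case (n : ℕ) (hn : 1 ≤ n) : Rs φ (List.replicate n 1) = 0 := by
  set v : List (Fin 2) := 0 :: 0 :: List.replicate (n-1) 1 with hv
  have hvlen : v.length = n + 1 := by simp [hv]; omega
  have heq := h1 v
  rw [hvlen] at heq
  rcases eq_or_lt_of_le hn with h1n | h2n
  · -- n = 1
    have hn1 : n = 1 := h1n.symm
    subst hn1
    rw [show v = [0, 0] from rfl] at heq
    rw [Finset.sum_range_succ, Finset.sum_range_succ, Finset.sum_range_zero] at heq
    have e0 : trig 1 φ (rot^[0] [(0:Fin 2), 0]) = Rs φ [1] := by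
      rw [Function.iterate_zero_apply, show ([(0:Fin 2),0]) = 0 :: 0 :: [] from rfl, trig_form]
    have e1 : trig 1 φ (rot^[1] [(0:Fin 2), 0]) = Rs φ [1] := by
      rw [Function.iterate_one, show rot [(0:Fin 2),0] = 0 :: 0 :: [] from rfl, trig_form]
    rw [e0, e1, zero_add] at heq
    have : (2:ℂ) * Rs φ [1] = 0 := by rw [two_mul]; exact heq
    have h2 : Rs φ (List.replicate 1 1) = Rs φ [1] := rfl
    rw [h2]
    exact (mul_eq_zero.mp this).resolve_left (by norm_num)
  · -- n ≥ 2
    rw [Finset.sum_range_succ'] at heq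
    have hz : ∀ k ∈ Finset.range n, trig 1 φ (rot^[k+1] v) = 0 := by
      intro k hk
      have hkn : k < n := Finset.mem_range.mp hk
      rcases Nat.eq_zero_or_pos k with rfl | hkpos
      · -- k = 0 : rot v = 0 :: (replicate (n-1) 1 ++ [0]), second letter is 1
        have : rot^[0+1] v = 0 :: (List.replicate (n-1) 1 ++ [0]) := by
          rw [Function.iterate_one, hv, rot_cons]
          rfl
        rw [this]
        have hrep : List.replicate (n-1) 1 ++ [0] = (1:Fin 2) ::
            (List.replicate (n-2) 1 ++ [0]) := by
          rw [show n - 1 = (n-2) + 1 by omega, List.replicate_succ, List.cons_append]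
        rw [hrep]
        exact trig_second_ne 1 φ 0 1 _ (by decide)
      · -- k ≥ 1 : rot^[k+1] v starts with 1
        have hk1 : k + 1 ≤ v.length := by omega
        rw [rot_drop_take _ _ hk1]
        have hdrop : v.drop (k+1) = List.replicate (n-k) 1 := by
          rw [hv, show k + 1 = (k - 1) + 1 + 1 by omega]
          rw [List.drop_succ_cons, List.drop_succ_cons, List.drop_replicate]
          congr 1
          omega
        rw [hdrop, show n - k = (n - k - 1) + 1 by omega, List.replicate_succ,
          List.cons_append]
        exact trig_head_ne 1 φ 1 _ (by decide)
    rw [Finset.sum_congr rfl hz, Finset.sum_const_zero, zero_add] at heq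
    have e0 : trig 1 φ (rot^[0] v) = Rs φ (List.replicate n 1) := by
      rw [Function.iterate_zero_apply, hv, trig_form]
      congr 1
      exact (replicate_pred hn 1).symm
    rw [e0] at heq
    exact heq

include h0 in
lemma has_zero_case : ∀ (d : ℕ) (w : List (Fin 2)), w ≠ [] → (0:Fin 2) ∈ w →
    w.length - Mx w ≤ d → Rs φ w = 0 := by
  intro d
  induction d using Nat.strong_induction_on with
  | _ d ihd =>
  intro w hw hmem hd
  set n := w.length with hn
  have hn1 : 1 ≤ n := List.length_pos_iff.mpr hw
  set m := Mx w with hm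
  have hm1 : 1 ≤ m := Mx_pos w hmem
  obtain ⟨k0, hk0, hlead⟩ := Mx_exists w hw
  set w' := rot^[k0] w with hw'
  have hw'len : w'.length = n := by rw [hw', rot_iter_length]
  have hw'Mx : Mx w' = m := by rw [hw', Mx_rot]
  have hRsw : Rs φ w' = Rs φ w := Rs_rot φ w k0
  rw [← hRsw]
  have hleadw' : lead w' = m := hlead
  set t' := w'.dropWhile (fun a => a == 0) with ht'
  have hdecomp : w' = List.replicate m 0 ++ t' := by
    conv_lhs => rw [lead_decomp w']
    rw [hleadw']
  rcases eq_or_ne t' [] with ht'nil | ht'ne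
  · -- w' = replicate n 0
    have hmn : m = n := by
      have := hw'len
      rw [hdecomp, ht'nil, List.append_nil, List.length_replicate] at this
      omega
    have hw'rep : w' = List.replicate n 0 := by
      rw [hdecomp, ht'nil, List.append_nil, hmn]
    set v : List (Fin 2) := List.replicate (n+1) 0 with hv
    have heq := h0 v
    have hvlen : v.length = n + 1 := by simp [hv]
    rw [hvlen] at heq
    have hterm : ∀ k ∈ Finset.range (n+1), trig 0 φ (rot^[k] v) = Rs φ w' := by
      intro k _
      rw [hv, rot_iter_replicate]
      rw [show List.replicate (n+1) (0:Fin 2) = 0 :: 0 :: List.replicate (n-1) 0 by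
        rw [List.replicate_succ, replicate_pred hn1]]
      rw [trig_form]
      congr 1
      rw [hw'rep, replicate_pred hn1]
    rw [Finset.sum_congr rfl hterm, Finset.sum_const, Finset.card_range] at heq
    have : ((n+1 : ℕ) : ℂ) * Rs φ w' = 0 := by
      rw [← nsmul_eq_mul]
      exact heq
    rcases mul_eq_zero.mp this with hc | hc
    · exfalso
      have : ((n+1 : ℕ) : ℂ) ≠ 0 := Nat.cast_ne_zero.mpr (by omega)
      exact this hc
    · exact hc
  · -- t' starts with 1
    obtain ⟨b, t'', hbt⟩ : ∃ b t'', t' = b :: t'' := by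
      rcases t' with _ | ⟨b, t''⟩
      · exact absurd rfl ht'ne
      · exact ⟨b, t'', rfl⟩
    have hb1 : b = 1 := by
      by_contra hb1
      have hb0 : b = 0 := by omega
      have hw'2 : w' = List.replicate (m+1) 0 ++ t'' := by
        rw [hdecomp, hbt, hb0, List.replicate_succ']
        simp
      have hge : m + 1 ≤ lead w' := by
        rw [hw'2]
        exact lead_replicate_append (m+1) t''
      rw [hleadw'] at hge
      omega
    have hlent : n = m + t'.length := by
      rw [← hw'len, hdecomp]
      simp
    have hmn : m < n := by
      rw [hlent, hbt]
      simp
    set V : List (Fin 2) := List.replicate (m+1) 0 ++ t' with hV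
    have hVlen : V.length = n + 1 := by
      rw [hV]
      simp only [List.length_append, List.length_replicate]
      omega
    have heq := h0 V
    rw [hVlen] at heq
    have hterm : ∀ k ∈ Finset.range (n+1),
        trig 0 φ (rot^[k] V) = if k < m then Rs φ w' else 0 := by
      intro k hk
      have hkn : k < n + 1 := Finset.mem_range.mp hk
      by_cases hkm : k < m
      · rw [if_pos hkm]
        have hkV : k ≤ V.length := by omega
        rw [rot_drop_take _ _ hkV]
        have hdropV : V.drop k = List.replicate (m+1-k) 0 ++ t' := by
          rw [hV, List.drop_append_of_le_length (by simp; omega), List.drop_replicate]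
        have htakeV : V.take k = List.replicate k 0 := by
          rw [hV, List.take_append_of_le_length (by simp; omega), List.take_replicate]
          congr 1
          simp
          omega
        rw [hdropV, htakeV]
        have hsplit : List.replicate (m+1-k) (0:Fin 2) = 0 :: 0 :: List.replicate (m-1-k) 0 := by
          rw [show m+1-k = (m-1-k) + 1 + 1 by omega, List.replicate_succ, List.replicate_succ]
        rw [hsplit]
        rw [show ((0:Fin 2) :: 0 :: List.replicate (m-1-k) 0 ++ t') ++ List.replicate k 0
          = 0 :: 0 :: (List.replicate (m-1-k) 0 ++ t' ++ List.replicate k 0) by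
            simp [List.append_assoc]]
        rw [trig_form]
        have hrotw' : rot^[k] w' = (List.replicate (m-k) 0 ++ t') ++ List.replicate k 0 := by
          rw [rot_drop_take _ _ (by omega : k ≤ w'.length), hdecomp,
            List.drop_append_of_le_length (by simp; omega),
            List.take_append_of_le_length (by simp; omega),
            List.drop_replicate, List.take_replicate]
          congr 2
          simp
          omega
        have : (0:Fin 2) :: (List.replicate (m-1-k) 0 ++ t' ++ List.replicate k 0)
            = rot^[k] w' := by
          rw [hrotw', show m - k = (m-1-k) + 1 by omega, List.replicate_succ]
          simp [List.append_assoc]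
        rw [this, Rs_rot]
      · rw [if_neg hkm]
        rcases eq_or_lt_of_le (Nat.le_of_not_lt hkm) with hkm' | hkm'
        · -- k = m
          have hkme : k = m := hkm'.symm
          rw [rot_drop_take _ _ (by omega : k ≤ V.length)]
          have hdropV : V.drop k = List.replicate 1 0 ++ t' := by
            rw [hV, hkme, List.drop_append_of_le_length (by simp), List.drop_replicate]
            congr 2
            omega
          have htakeV : V.take k = List.replicate k 0 := by
            rw [hV, hkme, List.take_append_of_le_length (by simp), List.take_replicate]
            congr 1
            simp
          rw [hdropV, htakeV, hbt, hb1, hkme]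
          rw [show (List.replicate 1 (0:Fin 2) ++ (1:Fin 2) :: t'') ++ List.replicate m 0
            = 0 :: 1 :: (t'' ++ List.replicate m 0) by simp]
          exact trig_second_ne 0 φ 0 1 _ (by decide)
        · -- k > m
          set j := k - (m+1) with hj
          have hjt : j < t'.length := by omega
          have hkform : k = (List.replicate (m+1) (0:Fin 2)).length + j := by
            simp only [List.length_replicate]
            omega
          rw [rot_drop_take _ _ (by omega : k ≤ V.length)]
          have hdropV : V.drop k = t'.drop j := by
            rw [hV, hkform, List.drop_length_add_append]
          have htakeV : V.take k = List.replicate (m+1) 0 ++ t'.take j := by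
            rw [hV, hkform, List.take_length_add_append]
          rw [hdropV, htakeV]
          obtain ⟨a, d1, had⟩ : ∃ a d1, t'.drop j = a :: d1 := by
            rcases hdt : t'.drop j with _ | ⟨a, d1⟩
            · exfalso
              rw [List.drop_eq_nil_iff] at hdt
              omega
            · exact ⟨a, d1, rfl⟩
          rw [had]
          set rest : List (Fin 2) := d1 ++ (List.replicate (m+1) 0 ++ t'.take j) with hrest
          have hshape : (a :: d1) ++ (List.replicate (m+1) 0 ++ t'.take j) = a :: rest := by
            simp [hrest]
          rw [hshape]
          -- rest is nonempty
          obtain ⟨b2, u2, hbu⟩ : ∃ b2 u2, rest = b2 :: u2 := by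
            rcases hr : rest with _ | ⟨b2, u2⟩
            · exfalso
              have : rest.length = 0 := by simp [hr]
              rw [hrest] at this
              simp at this
            · exact ⟨b2, u2, rfl⟩
          rw [hbu]
          by_cases hab : a = 0 ∧ b2 = 0
          · rw [trig, if_pos hab]
            have hrest0 : (0:Fin 2) :: u2 = rest := by rw [hbu, hab.2]
            rw [hrest0]
            -- apply induction hypothesis to rest
            have hrestlen : rest.length = n := by
              have hd1 : d1.length = t'.length - j - 1 := by
                have := congrArg List.length had
                simp at this
                omega
              rw [hrest]
              simp only [List.length_append, List.length_replicate, List.length_take]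
              omega
            have hrestne : rest ≠ [] := by
              rw [hbu]
              exact List.cons_ne_nil _ _
            have hrestmem : (0:Fin 2) ∈ rest := by
              rw [hrest]
              refine List.mem_append_right _ (List.mem_append_left _ ?_)
              rw [List.mem_replicate]
              exact ⟨by omega, rfl⟩
            have hrestMx : m + 1 ≤ Mx rest := Mx_ge d1 (t'.take j) (m+1) (by omega)
            have hd' : rest.length - Mx rest < d := by
              have h1' : rest.length - Mx rest ≤ n - (m+1) := by
                rw [hrestlen]
                omega
              have h2' : n - m ≤ d := by omega
              omega
            exact ihd (rest.length - Mx rest) hd' rest hrestne hrestmem le_rfl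
          · rw [trig, if_neg hab]
    rw [Finset.sum_congr rfl hterm] at heq
    have hsum : ∑ k ∈ Finset.range (n+1), (if k < m then Rs φ w' else 0)
        = (m : ℂ) * Rs φ w' := by
      rw [← Finset.sum_subset (Finset.range_subset_range.mpr (by omega : m ≤ n+1))
        (fun x _ hxm => if_neg (by rw [Finset.mem_range] at hxm; omega))]
      rw [Finset.sum_congr rfl (fun x hx => if_pos (Finset.mem_range.mp hx)),
        Finset.sum_const, Finset.card_range, nsmul_eq_mul]
    rw [hsum] at heq
    rcases mul_eq_zero.mp heq with hc | hc
    · exfalso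
      exact (Nat.cast_ne_zero.mpr (by omega : m ≠ 0)) hc
    · exact hc

include h0 h1 in
lemma mainComb : ∀ w : List (Fin 2), w ≠ [] → Rs φ w = 0 := by
  intro w hw
  by_cases hmem : (0:Fin 2) ∈ w
  · exact has_zero_case φ h0 (w.length - Mx w) w hw hmem le_rfl
  · have hrep : w = List.replicate w.length 1 := by
      rw [List.eq_replicate_iff]
      refine ⟨rfl, fun b hb => ?_⟩
      have : b ≠ 0 := fun h => hmem (h ▸ hb)
      omega
    rw [hrep]
    exact all_ones_case φ h1 w.length (List.length_pos_iff.mpr hw)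

end MainComb


/-! ### the algebra side -/

def e : A2 ≃ₐ[ℂ] M := FreeAlgebra.equivMonoidAlgebraFreeMonoid

lemma e_X : e Xg = dw [0] := by
  rw [dw, FreeMonoid.ofList_singleton]
  simp [e, Xg, FreeAlgebra.equivMonoidAlgebraFreeMonoid]

lemma e_Y : e Yg = dw [1] := by
  rw [dw, FreeMonoid.ofList_singleton]
  simp [e, Yg, FreeAlgebra.equivMonoidAlgebraFreeMonoid]

lemma mem_commSpan_iff (z : A2) : z ∈ commSpan ↔ e z ∈ commSpanM := by
  have hmap : Submodule.map (e.toLinearMap : A2 →ₗ[ℂ] M) commSpan = commSpanM := by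
    rw [commSpan, commSpanM, Submodule.map_span]
    congr 1
    ext y
    constructor
    · rintro ⟨x, ⟨a, b, rfl⟩, rfl⟩
      exact ⟨e a, e b, by simp [map_sub, map_mul]⟩
    · rintro ⟨a, b, rfl⟩
      refine ⟨e.symm a * e.symm b - e.symm b * e.symm a, ⟨e.symm a, e.symm b, rfl⟩, ?_⟩
      simp [map_sub, map_mul]
  constructor
  · intro h
    rw [← hmap]
    exact Submodule.mem_map_of_mem h
  · intro h
    rw [← hmap] at h
    obtain ⟨y, hy, hyz⟩ := h
    have : y = z := e.injective hyz
    rwa [← this]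

lemma mu_tmul (x y : A2) : mu (x ⊗ₜ[ℂ] y) = x * y := LinearMap.mul'_apply

lemma sand1 (t : A2 ⊗[ℂ] A2) (b z : A2) :
    mu ((TensorProduct.comm ℂ A2 A2) ((b ⊗ₜ[ℂ] (1:A2)) * t) * (z ⊗ₜ[ℂ] (1:A2)))
      = mu ((TensorProduct.comm ℂ A2 A2) t * ((z * b) ⊗ₜ[ℂ] (1:A2))) := by
  induction t using TensorProduct.induction_on with
  | zero => simp
  | tmul u v =>
      simp only [Algebra.TensorProduct.tmul_mul_tmul, mul_one, one_mul,
        TensorProduct.comm_tmul, mu_tmul, mul_assoc]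
  | add x y hx hy =>
      rw [mul_add, map_add, add_mul, map_add, hx, hy, map_add, add_mul, map_add]

lemma sand2 (t : A2 ⊗[ℂ] A2) (c z : A2) :
    mu ((TensorProduct.comm ℂ A2 A2) (t * ((1:A2) ⊗ₜ[ℂ] c)) * (z ⊗ₜ[ℂ] (1:A2)))
      = mu ((TensorProduct.comm ℂ A2 A2) t * ((c * z) ⊗ₜ[ℂ] (1:A2))) := by
  induction t using TensorProduct.induction_on with
  | zero => simp
  | tmul u v =>
      simp only [Algebra.TensorProduct.tmul_mul_tmul, mul_one, one_mul,
        TensorProduct.comm_tmul, mu_tmul, mul_assoc]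
  | add x y hx hy =>
      rw [add_mul, map_add, add_mul, map_add, hx, hy, map_add, add_mul, map_add]

section Bracket

variable (B : A2 →ₗ[ℂ] A2 →ₗ[ℂ] A2 ⊗[ℂ] A2)
  (hder : ∀ a b c : A2, B a (b * c)
      = (b ⊗ₜ[ℂ] (1 : A2)) * B a c + B a b * ((1 : A2) ⊗ₜ[ℂ] c))
  (hskew : ∀ a b : A2, B a b = - (TensorProduct.comm ℂ A2 A2) (B b a))
  (hxx : B Xg Xg = 0) (hyy : B Yg Yg = 0)
  (hxy : B Xg Yg = Xg ⊗ₜ[ℂ] Xg)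

include hder in
lemma B_one (a : A2) : B a 1 = 0 := by
  have h := hder a 1 1
  rw [mul_one, ← Algebra.TensorProduct.one_def, one_mul, mul_one] at h
  have h2 : B a 1 + B a 1 = B a 1 + 0 := by rw [add_zero]; exact h.symm
  exact (add_left_cancel h2)

include hder hskew in
lemma B_one' (a : A2) : B 1 a = 0 := by
  rw [hskew 1 a, B_one B hder, map_zero, neg_zero]

include hder hskew hxx hxy in
lemma cmp1 (f : A2) : ∀ z : A2,
    mu ((TensorProduct.comm ℂ A2 A2) (B Xg f) * (z ⊗ₜ[ℂ] (1:A2)))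
      = e.symm (FM 1 (e f) (e z)) := by
  refine FreeAlgebra.induction ℂ (Fin 2) ?_ ?_ ?_ ?_ f
  · intro r z
    have hB : B Xg ((algebraMap ℂ A2) r) = 0 := by
      rw [Algebra.algebraMap_eq_smul_one, map_smul, B_one B hder, smul_zero]
    rw [hB, map_zero, zero_mul, map_zero]
    have he : e ((algebraMap ℂ A2) r) = r • (1 : M) := by
      rw [AlgEquiv.commutes, Algebra.algebraMap_eq_smul_one]
    rw [he, map_smul]
    have h1M : FM 1 (1 : M) = 0 := by
      rw [MonoidAlgebra.one_def, show MonoidAlgebra.single (1:W) (1:ℂ)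
        = MonoidAlgebra.single (1:W) (1:ℂ) from rfl, FM_single]
      rw [show FreeMonoid.toList (1:W) = [] from FreeMonoid.toList_one, Fm_nil, smul_zero]
    rw [h1M]
    simp
  · intro i z
    have hi : i = 0 ∨ i = 1 := by omega
    rcases hi with rfl | rfl
    · -- f = Xg
      rw [show FreeAlgebra.ι ℂ (0 : Fin 2) = Xg from rfl] at *
      rw [hxx, map_zero, zero_mul, map_zero]
      rw [e_X, show dw [0] = MonoidAlgebra.single (FreeMonoid.ofList [0]) 1 from rfl,
        FM_single, one_smul]
      rw [show FreeMonoid.toList (FreeMonoid.ofList [(0:Fin 2)]) = [0] from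
        FreeMonoid.toList_ofList _]
      rw [Fm_cons, Fm_nil, LinearMap.zero_apply, zero_add, if_neg (by decide), map_zero]
    · -- f = Yg
      rw [show FreeAlgebra.ι ℂ (1 : Fin 2) = Yg from rfl, hxy]
      rw [TensorProduct.comm_tmul, Algebra.TensorProduct.tmul_mul_tmul, mul_one, mu_tmul]
      rw [e_Y, show dw [1] = MonoidAlgebra.single (FreeMonoid.ofList [1]) 1 from rfl,
        FM_single, one_smul]
      rw [show FreeMonoid.toList (FreeMonoid.ofList [(1:Fin 2)]) = [1] from
        FreeMonoid.toList_ofList _]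
      rw [Fm_cons, Fm_nil, LinearMap.zero_apply, zero_add, if_pos rfl]
      rw [dw_nil, one_mul, map_mul, map_mul]
      have hXX : e.symm XX = Xg := by
        rw [show XX = dw [0] from rfl, ← e_X, AlgEquiv.symm_apply_apply]
      rw [hXX, AlgEquiv.symm_apply_apply, mul_assoc]
  · intro a b iha ihb z
    rw [hder Xg a b, map_add, add_mul, map_add]
    rw [sand1, sand2, iha (b * z), ihb (z * a)]
    conv_rhs => rw [map_mul, FM_mul, map_add]
    rw [show e z * e a = e (z * a) from (map_mul e z a).symm,
      show e b * e z = e (b * z) from (map_mul e b z).symm]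
  · intro a b iha ihb z
    rw [map_add, map_add, add_mul, map_add, iha z, ihb z]
    simp only [map_add, LinearMap.add_apply]

include hder hskew hxy hyy in
lemma cmp0 (f : A2) : ∀ z : A2,
    mu ((TensorProduct.comm ℂ A2 A2) (B Yg f) * (z ⊗ₜ[ℂ] (1:A2)))
      = - e.symm (FM 0 (e f) (e z)) := by
  refine FreeAlgebra.induction ℂ (Fin 2) ?_ ?_ ?_ ?_ f
  · intro r z
    have hB : B Yg ((algebraMap ℂ A2) r) = 0 := by
      rw [Algebra.algebraMap_eq_smul_one, map_smul, B_one B hder, smul_zero]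
    rw [hB, map_zero, zero_mul, map_zero]
    have he : e ((algebraMap ℂ A2) r) = r • (1 : M) := by
      rw [AlgEquiv.commutes, Algebra.algebraMap_eq_smul_one]
    rw [he, map_smul]
    have h1M : FM 0 (1 : M) = 0 := by
      rw [MonoidAlgebra.one_def, show MonoidAlgebra.single (1:W) (1:ℂ)
        = MonoidAlgebra.single (1:W) (1:ℂ) from rfl, FM_single]
      rw [show FreeMonoid.toList (1:W) = [] from FreeMonoid.toList_one, Fm_nil, smul_zero]
    rw [h1M]
    simp
  · intro i z
    have hi : i = 0 ∨ i = 1 := by omega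
    rcases hi with rfl | rfl
    · -- f = Xg
      have hBYX : B Yg Xg = (-1 : ℂ) • (Xg ⊗ₜ[ℂ] Xg) := by
        rw [hskew Yg Xg, hxy, TensorProduct.comm_tmul]
        exact (neg_one_smul ℂ _).symm
      rw [show FreeAlgebra.ι ℂ (0 : Fin 2) = Xg from rfl, hBYX]
      rw [map_smul, smul_mul_assoc, map_smul, TensorProduct.comm_tmul,
        Algebra.TensorProduct.tmul_mul_tmul, mul_one, mu_tmul, neg_one_smul]
      rw [neg_inj]
      rw [e_X, show dw [0] = MonoidAlgebra.single (FreeMonoid.ofList [0]) 1 from rfl,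
        FM_single, one_smul]
      rw [show FreeMonoid.toList (FreeMonoid.ofList [(0:Fin 2)]) = [0] from
        FreeMonoid.toList_ofList _]
      rw [Fm_cons, Fm_nil, LinearMap.zero_apply, zero_add, if_pos rfl]
      rw [dw_nil, one_mul, map_mul, map_mul]
      have hXX : e.symm XX = Xg := by
        rw [show XX = dw [0] from rfl, ← e_X, AlgEquiv.symm_apply_apply]
      rw [hXX, AlgEquiv.symm_apply_apply, mul_assoc]
    · -- f = Yg
      rw [show FreeAlgebra.ι ℂ (1 : Fin 2) = Yg from rfl, hyy, map_zero, zero_mul, map_zero]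
      rw [e_Y, show dw [1] = MonoidAlgebra.single (FreeMonoid.ofList [1]) 1 from rfl,
        FM_single, one_smul]
      rw [show FreeMonoid.toList (FreeMonoid.ofList [(1:Fin 2)]) = [1] from
        FreeMonoid.toList_ofList _]
      rw [Fm_cons, Fm_nil, LinearMap.zero_apply, zero_add, if_neg (by decide), map_zero,
        neg_zero]
  · intro a b iha ihb z
    rw [hder Yg a b, map_add, add_mul, map_add]
    rw [sand1, sand2, iha (b * z), ihb (z * a)]
    conv_rhs => rw [map_mul, FM_mul, map_add, neg_add]
    rw [show e z * e a = e (z * a) from (map_mul e z a).symm,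
      show e b * e z = e (b * z) from (map_mul e b z).symm]
  · intro a b iha ihb z
    rw [map_add, map_add, add_mul, map_add, iha z, ihb z]
    simp only [map_add, LinearMap.add_apply, neg_add]

include hder hskew in
lemma mem_cas_iff (f : A2) : f ∈ Cas B ↔ ∀ a : A2, mu (B f a) ∈ commSpan := by
  rw [Cas, Submodule.mem_iInf]
  constructor
  · intro h a
    exact Submodule.mem_comap.mp (h a)
  · intro h a
    exact Submodule.mem_comap.mpr (h a)

include hder hskew in
lemma one_mem_cas : (1:A2) ∈ Cas B := by
  rw [mem_cas_iff B hder hskew]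
  intro a
  rw [B_one' B hder hskew, map_zero]
  exact Submodule.zero_mem _

include hder hskew hxx hyy hxy in
lemma cas_conditions (f : A2) (hf : f ∈ Cas B) :
    FM 1 (e f) 1 ∈ commSpanM ∧ FM 0 (e f) 1 ∈ commSpanM := by
  have hmem := (mem_cas_iff B hder hskew f).mp hf
  have base : ∀ g : A2, mu ((TensorProduct.comm ℂ A2 A2) (B g f)) ∈ commSpan → True := fun _ _ => trivial
  constructor
  · have h := hmem Xg
    rw [hskew f Xg, map_neg] at h
    have h2 := Submodule.neg_mem _ h
    rw [neg_neg] at h2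
    have h3 := cmp1 B hder hskew hxx hxy f 1
    rw [map_one, ← Algebra.TensorProduct.one_def, mul_one] at h3
    rw [h3] at h2
    rw [mem_commSpan_iff] at h2
    rwa [AlgEquiv.apply_symm_apply] at h2
  · have h := hmem Yg
    rw [hskew f Yg, map_neg] at h
    have h2 := Submodule.neg_mem _ h
    rw [neg_neg] at h2
    have h3 := cmp0 B hder hskew hyy hxy f 1
    rw [map_one, ← Algebra.TensorProduct.one_def, mul_one] at h3
    rw [h3] at h2
    have h4 := Submodule.neg_mem _ h2
    rw [neg_neg] at h4
    rw [mem_commSpan_iff] at h4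
    rwa [AlgEquiv.apply_symm_apply] at h4

def piA : A2 →ₐ[ℂ] ℂ := FreeAlgebra.lift ℂ (fun _ : Fin 2 => (0:ℂ))

lemma piA_comm (z : A2) (hz : z ∈ commSpan) : piA z = 0 := by
  induction hz using Submodule.span_induction with
  | zero => simp
  | add x y _ _ hx hy => rw [map_add, hx, hy, add_zero]
  | smul c x _ hx => rw [map_smul, hx, smul_zero]
  | mem x hx =>
      obtain ⟨a, b, rfl⟩ := hx
      rw [map_sub, map_mul, map_mul, mul_comm, sub_self]

include hder hskew hxx hyy hxy in
lemma cas_main (f : A2) (hf : f ∈ Cas B) (hpi : piA f = 0) : f ∈ commSpan := by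
  obtain ⟨hc1, hc0⟩ := cas_conditions B hder hskew hxx hyy hxy f hf
  set φ : M := e f with hφ
  have h1' := fun v => Econd 1 φ hc1 v
  have h0' := fun v => Econd 0 φ hc0 v
  have key := mainComb φ h0' h1'
  have hC2 := C2 φ key
  set c : ℂ := φ 1 with hc
  have hsub : f - c • 1 ∈ commSpan := by
    rw [mem_commSpan_iff, map_sub, map_smul, map_one]
    exact hC2
  have hpic : piA f = c := by
    have : f = (f - c • 1) + c • 1 := by abel
    rw [this, map_add, piA_comm _ hsub, map_smul, map_one, zero_add, smul_eq_mul, mul_one]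
  rw [hpi] at hpic
  have : f - c • 1 = f := by rw [← hpic, zero_smul, sub_zero]
  rwa [this] at hsub

end Bracket

end Stmt16

/-- For the double Poisson bracket on `ℂ⟨x,y⟩` with `⟪x,y⟫ = x⊗x`,
`⟪x,x⟫ = ⟪y,y⟫ = 0`, the zeroth double Poisson cohomology — double Casimirs modulo
`[A,A]` — equals `ℂ`. -/
theorem stmt_16 (B : A2 →ₗ[ℂ] A2 →ₗ[ℂ] A2 ⊗[ℂ] A2)
    (hder : ∀ a b c : A2, B a (b * c)
      = (b ⊗ₜ[ℂ] (1 : A2)) * B a c + B a b * ((1 : A2) ⊗ₜ[ℂ] c))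
    (hskew : ∀ a b : A2, B a b = - (TensorProduct.comm ℂ A2 A2) (B b a))
    (hxx : B Xg Xg = 0) (hyy : B Yg Yg = 0)
    (hxy : B Xg Yg = Xg ⊗ₜ[ℂ] Xg) :
    Nonempty ((Cas B ⧸ (commSpan.comap (Cas B).subtype)) ≃ₗ[ℂ] ℂ) := by
  classical
  set φmap : ↥(Cas B) →ₗ[ℂ] ℂ := Stmt16.piA.toLinearMap ∘ₗ (Cas B).subtype with hφmap
  have hker : LinearMap.ker φmap = commSpan.comap (Cas B).subtype := by
    ext x
    rw [LinearMap.mem_ker, Submodule.mem_comap]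
    constructor
    · intro h
      exact Stmt16.cas_main B hder hskew hxx hyy hxy x.1 x.2 h
    · intro h
      exact Stmt16.piA_comm _ h
  have hsurj : Function.Surjective φmap := by
    intro r
    refine ⟨⟨r • 1, Submodule.smul_mem _ r (Stmt16.one_mem_cas B hder hskew)⟩, ?_⟩
    rw [hφmap]
    simp only [LinearMap.comp_apply, Submodule.subtype_apply, AlgHom.toLinearMap_apply]
    rw [map_smul, map_one, smul_eq_mul, mul_one]
  exact ⟨(Submodule.quotEquivOfEq _ _ hker.symm).trans (φmap.quotKerEquivOfSurjective hsurj)⟩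

end
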